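/- Let K be a commutative ring, n ≥ 1, a, b : Fin n → K and s ∈ K. For I ⊆ {1,…,n} set x(I) = (1−s)·∏_{i∈I} a_i + s·∏_{i∈I} b_i (so x(∅) = 1). Define y(I) = ∑_{A ⊆ I} (−1)^{|I∖A|} · x(A) · ∏_{i∈I∖A} x({i}), and z(I) = ∑_{π} (−1)^{|π|−1} ∏_{B∈π} y(B), where the sum runs over all interval partitions π of I, i.e. set partitions of I each of whose blocks B is order-convex in I (for all i < j < k in I, if i ∈ B and k ∈ B then j ∈ B). Then for every I with |I| ≥ 2, z(I) = s·(1−s)·(1−2s)^{|I|−2} · ∏_{i∈I} (b_i − a_i). -/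

import Mathlib

open Finset

namespace SecantAux


variable {K : Type*} [CommRing K] {n : ℕ}




def cf (s : K) (k : ℕ) : K := (1 - s) * (-s) ^ k + s * (1 - s) ^ k

def hf (s : K) : ℕ → K
  | 0 => 1
  | 1 => 0
  | m + 2 => -(s * (1 - s) * (1 - 2 * s) ^ m)

lemma cf_zero (s : K) : cf s 0 = 1 := by simp [cf]

lemma cf_one (s : K) : cf s 1 = 0 := by simp [cf]; ring

lemma cf_rec (s : K) (m : ℕ) :
    cf s (m + 2) = (1 - 2 * s) * cf s (m + 1) + s * (1 - s) * cf s m := by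
  simp only [cf, pow_succ]; ring

lemma hf_step (s : K) (m : ℕ) : hf s (m + 3) = (1 - 2 * s) * hf s (m + 2) := by
  show -(s * (1 - s) * (1 - 2 * s) ^ (m + 1)) = (1 - 2 * s) * -(s * (1 - s) * (1 - 2 * s) ^ m)
  rw [pow_succ]; ring

lemma hf_rec (s : K) : ∀ m : ℕ,
    hf s (m + 1) = -∑ k ∈ Finset.range (m + 1), cf s (m + 1 - k) * hf s k := by
  intro m
  induction m using Nat.strong_induction_on with
  | _ m ih =>
    match m with
    | 0 => simp [hf, cf_one]
    | 1 =>
      rw [show (1 : ℕ) + 1 = 2 from rfl, Finset.sum_range_succ, Finset.sum_range_succ,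
        Finset.sum_range_zero]
      show -(s * (1 - s) * (1 - 2 * s) ^ 0) =
        -(0 + cf s (2 - 0) * (1 : K) + cf s (2 - 1) * (0 : K))
      rw [show (2 : ℕ) - 0 = 2 from rfl, show (2 : ℕ) - 1 = 1 from rfl, cf_one]
      simp [cf]; ring
    | j + 2 =>
      have IH1 := ih (j + 1) (by omega)
      have IH0 := ih j (by omega)
      rw [Finset.sum_range_succ]
      rw [show j + 2 + 1 - (j + 2) = 1 from by omega, cf_one, zero_mul, add_zero]
      have split : ∀ k ∈ Finset.range (j + 2), cf s (j + 2 + 1 - k) * hf s k =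
          (1 - 2 * s) * (cf s (j + 1 + 1 - k) * hf s k)
            + s * (1 - s) * (cf s (j + 1 - k) * hf s k) := by
        intro k hk
        rw [Finset.mem_range] at hk
        rw [show j + 2 + 1 - k = (j + 1 - k) + 2 from by omega,
          show j + 1 + 1 - k = (j + 1 - k) + 1 from by omega, cf_rec]
        ring
      rw [Finset.sum_congr rfl split, Finset.sum_add_distrib, ← Finset.mul_sum, ← Finset.mul_sum]
      have T0 : ∑ k ∈ Finset.range (j + 2), cf s (j + 1 - k) * hf s k = 0 := by
        rw [Finset.sum_range_succ, show j + 1 - (j + 1) = 0 from by omega, cf_zero, one_mul,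
          IH0]
        exact add_neg_cancel _
      rw [T0, mul_zero, add_zero, hf_step, IH1]
      ring

noncomputable def phi (I : Finset (Fin n)) (hne : I.Nonempty) (π : Finpartition I) : Fin n :=
  (π.part (I.max' hne)).min' ⟨I.max' hne, π.mem_part (I.max'_mem hne)⟩

lemma phi_mem (I : Finset (Fin n)) (hne : I.Nonempty) (π : Finpartition I) :
    phi I hne π ∈ π.part (I.max' hne) := Finset.min'_mem _ _

lemma phi_le (I : Finset (Fin n)) (hne : I.Nonempty) (π : Finpartition I)
    (x : Fin n) (hx : x ∈ π.part (I.max' hne)) : phi I hne π ≤ x :=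
  Finset.min'_le _ _ hx

lemma parts_inj {s : Finset (Fin n)} (π₁ π₂ : Finpartition s)
    (hp : π₁.parts = π₂.parts) : π₁ = π₂ := by
  ext x; rw [hp]

open scoped Classical in
noncomputable def Hs (c : ℕ → K) (I : Finset (Fin n)) : K :=
  ∑ π ∈ Finset.univ.filter
      (fun π : Finpartition I => ∀ B ∈ π.parts,
        ∀ i ∈ B, ∀ k ∈ B, ∀ j ∈ I, i < j → j < k → j ∈ B),
    (-1 : K) ^ π.parts.card * ∏ B ∈ π.parts, c B.card

open scoped Classical in
lemma Hs_eq (c h : ℕ → K) (h0 : h 0 = 1)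
    (hrec : ∀ m : ℕ, h (m + 1) = -∑ k ∈ Finset.range (m + 1), c (m + 1 - k) * h k) :
    ∀ I : Finset (Fin n), Hs c I = h I.card := by
  intro I
  induction I using Finset.strongInduction with
  | _ I ih =>
    rcases I.eq_empty_or_nonempty with rfl | hne
    · haveI : Unique (Finpartition (∅ : Finset (Fin n))) :=
        Finset.bot_eq_empty (α := Fin n) ▸ inferInstance
      have h1 : ∀ π : Finpartition (∅ : Finset (Fin n)), π.parts = ∅ := fun π =>
        Finpartition.parts_eq_empty_iff.mpr rfl
      have hterm : Hs c (∅ : Finset (Fin n)) = 1 := by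
        simp only [Hs]
        rw [Finset.filter_true_of_mem (fun π _ => by simp [h1 π]), Finset.univ_unique,
          Finset.sum_singleton, h1, Finset.card_empty, Finset.prod_empty]
        simp
      rw [hterm, Finset.card_empty, h0]
    · -- nonempty case
      have hM : I.max' hne ∈ I := I.max'_mem hne
      set M := I.max' hne with hMdef
      have hmaps : ∀ π ∈ Finset.univ.filter
          (fun π : Finpartition I => ∀ B ∈ π.parts,
            ∀ i ∈ B, ∀ k ∈ B, ∀ j ∈ I, i < j → j < k → j ∈ B),
          phi I hne π ∈ I := fun π _ => π.le (π.part_mem.2 hM) (phi_mem I hne π)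
      have key : ∀ t ∈ I,
          (∑ π ∈ (Finset.univ.filter
            (fun π : Finpartition I => ∀ B ∈ π.parts,
              ∀ i ∈ B, ∀ k ∈ B, ∀ j ∈ I, i < j → j < k → j ∈ B)).filter
                (fun π => phi I hne π = t),
            (-1 : K) ^ π.parts.card * ∏ B ∈ π.parts, c B.card)
          = -(c ((I.filter (fun x => t ≤ x)).card) * h ((I.filter (fun x => x < t)).card)) := by
        intro t ht
        set Bt := I.filter (fun x => t ≤ x) with hBtdef
        set Jt := I.filter (fun x => x < t) with hJtdef
        have htB : t ∈ Bt := Finset.mem_filter.2 ⟨ht, le_refl t⟩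
        have hdisj : Disjoint Jt Bt := by
          rw [Finset.disjoint_left]
          intro x hx hx'
          exact absurd (Finset.mem_filter.1 hx').2 (not_le.2 (Finset.mem_filter.1 hx).2)
        have hsup : Jt ⊔ Bt = I := by
          ext x
          simp only [Finset.sup_eq_union, Finset.mem_union, hJtdef, hBtdef, Finset.mem_filter]
          constructor
          · rintro (⟨hx, _⟩ | ⟨hx, _⟩) <;> exact hx
          · intro hx
            rcases lt_or_ge x t with h' | h'
            · exact Or.inl ⟨hx, h'⟩
            · exact Or.inr ⟨hx, h'⟩
        have hBne : Bt ≠ (⊥ : Finset (Fin n)) := fun hh => by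
          rw [hh] at htB; exact absurd htB (Finset.notMem_empty t)
        have hnotmem : ∀ π' : Finpartition Jt, Bt ∉ π'.parts := by
          intro π' hmem
          have h1 : t ∈ Jt := π'.le hmem htB
          exact absurd (Finset.mem_filter.1 h1).2 (lt_irrefl t)
        have hJtlt : Jt ⊂ I := (Finset.ssubset_iff_of_subset (Finset.filter_subset _ _)).2
          ⟨t, ht, fun hmem => absurd (Finset.mem_filter.1 hmem).2 (lt_irrefl t)⟩
        have hMB : M ∈ Bt := Finset.mem_filter.2 ⟨hM, I.le_max' t ht⟩
        have hbij : (∑ π' ∈ Finset.univ.filter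
              (fun π' : Finpartition Jt => ∀ B ∈ π'.parts,
                ∀ i ∈ B, ∀ k ∈ B, ∀ j ∈ Jt, i < j → j < k → j ∈ B),
            (-1 : K) * c Bt.card * ((-1 : K) ^ π'.parts.card * ∏ B ∈ π'.parts, c B.card))
            = ∑ π ∈ (Finset.univ.filter
              (fun π : Finpartition I => ∀ B ∈ π.parts,
                ∀ i ∈ B, ∀ k ∈ B, ∀ j ∈ I, i < j → j < k → j ∈ B)).filter
                  (fun π => phi I hne π = t),
              (-1 : K) ^ π.parts.card * ∏ B ∈ π.parts, c B.card := by
          refine Finset.sum_bij (fun π' _ => π'.extend hBne hdisj hsup) ?_ ?_ ?_ ?_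
          · -- maps into the fiber
            intro π' hπ'
            simp only [Finset.mem_filter, Finset.mem_univ, true_and] at hπ' ⊢
            constructor
            · intro B hB i hi k hk j hj hij hjk
              rw [Finpartition.extend_parts, Finset.mem_insert] at hB
              rcases hB with rfl | hB
              · exact Finset.mem_filter.2 ⟨hj, le_trans (Finset.mem_filter.1 hi).2 hij.le⟩
              · have hkJ : k ∈ Jt := π'.le hB hk
                have hjJ : j ∈ Jt :=
                  Finset.mem_filter.2 ⟨hj, lt_trans hjk (Finset.mem_filter.1 hkJ).2⟩
                exact hπ' B hB i hi k hk j hjJ hij hjk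
            · have hpart : (π'.extend hBne hdisj hsup).part M = Bt :=
                Finpartition.part_eq_of_mem _
                  (by rw [Finpartition.extend_parts]; exact Finset.mem_insert_self _ _) hMB
              apply le_antisymm
              · exact Finset.min'_le _ t (by rw [hpart]; exact htB)
              · apply Finset.le_min'
                intro y hy
                rw [hpart] at hy
                exact (Finset.mem_filter.1 hy).2
          · -- injectivity
            intro π₁ h₁ π₂ h₂ heq
            have hp := congrArg Finpartition.parts heq
            simp only [Finpartition.extend_parts] at hp
            refine parts_inj _ _ ?_
            rw [← Finset.erase_insert (hnotmem π₁), ← Finset.erase_insert (hnotmem π₂), hp]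
          · -- surjectivity
            intro π hπ
            simp only [Finset.mem_filter, Finset.mem_univ, true_and] at hπ
            obtain ⟨hP, hφt⟩ := hπ
            have hBmem : π.part M ∈ π.parts := π.part_mem.2 hM
            have hMinB : M ∈ π.part M := π.mem_part hM
            have htB' : t ∈ π.part M := by rw [← hφt]; exact phi_mem I hne π
            have hBeq : π.part M = Bt := by
              apply Finset.Subset.antisymm
              · intro x hx
                refine Finset.mem_filter.2 ⟨π.le hBmem hx, ?_⟩
                rw [← hφt]; exact phi_le I hne π x hx
              · intro j hj
                obtain ⟨hjI, htj⟩ := Finset.mem_filter.1 hj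
                rcases eq_or_lt_of_le htj with rfl | htj'
                · exact htB'
                · have hjM : j ≤ M := I.le_max' j hjI
                  rcases eq_or_lt_of_le hjM with rfl | hjM'
                  · exact hMinB
                  · exact hP (π.part M) hBmem t htB' M hMinB j hjI htj' hjM'
            refine ⟨⟨π.parts.erase Bt, π.supIndep.subset (Finset.erase_subset _ _), ?_, ?_⟩,
              ?_, ?_⟩
            · -- sup_parts = Jt
              apply le_antisymm
              · apply Finset.sup_le
                intro B' hB'
                obtain ⟨hne', hB'p⟩ := Finset.mem_erase.1 hB'
                intro x hx
                have hxI : x ∈ I := π.le hB'p hx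
                refine Finset.mem_filter.2 ⟨hxI, ?_⟩
                by_contra hcon
                push_neg at hcon
                have hxB : x ∈ Bt := Finset.mem_filter.2 ⟨hxI, hcon⟩
                rw [← hBeq] at hxB
                exact hne' ((π.eq_of_mem_parts hB'p hBmem hx hxB).trans hBeq)
              · intro x hx
                obtain ⟨hxI, hxt⟩ := Finset.mem_filter.1 hx
                obtain ⟨B'', hB'', hxB''⟩ := π.exists_mem hxI
                have hBne'' : B'' ≠ Bt := by
                  rintro rfl
                  exact absurd (Finset.mem_filter.1 hxB'').2 (not_le.2 hxt)
                exact (Finset.le_sup (f := id) (Finset.mem_erase.2 ⟨hBne'', hB''⟩)) hxB''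
            · -- ⊥ ∉ parts
              intro hbot
              exact π.bot_notMem (Finset.mem_erase.1 hbot).2
            · -- membership in source filter
              simp only [Finset.mem_filter, Finset.mem_univ, true_and]
              intro B' hB' i hi k hk j hj hij hjk
              exact hP B' (Finset.mem_of_mem_erase hB') i hi k hk j
                (Finset.mem_filter.1 hj).1 hij hjk
            · -- extend equals π
              refine parts_inj _ _ ?_
              rw [Finpartition.extend_parts]
              exact Finset.insert_erase (hBeq ▸ hBmem)
          · -- values agree
            intro π' hπ'
            rw [Finpartition.card_extend, Finpartition.extend_parts,
              Finset.prod_insert (hnotmem π'), pow_succ]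
            ring
        rw [← hbij, ← Finset.mul_sum]
        have hHs : (∑ π' ∈ Finset.univ.filter
              (fun π' : Finpartition Jt => ∀ B ∈ π'.parts,
                ∀ i ∈ B, ∀ k ∈ B, ∀ j ∈ Jt, i < j → j < k → j ∈ B),
            (-1 : K) ^ π'.parts.card * ∏ B ∈ π'.parts, c B.card) = Hs c Jt := rfl
        rw [hHs, ih Jt hJtlt]
        ring
      have hcards : ∀ t ∈ I,
          (I.filter (fun x => x < t)).card + (I.filter (fun x => t ≤ x)).card = I.card := by
        intro t ht
        have h2 := Finset.card_filter_add_card_filter_not (s := I) (p := fun x => x < t)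
        have h3 : I.filter (fun a => ¬ a < t) = I.filter (fun x => t ≤ x) := by
          apply Finset.filter_congr
          intro x _
          simp [not_lt]
        rw [h3] at h2
        exact h2
      have hmono : ∀ u v, u ∈ I → v ∈ I → u < v →
          (I.filter (fun x => x < u)).card < (I.filter (fun x => x < v)).card := by
        intro u v hu hv huv
        apply Finset.card_lt_card
        rw [Finset.ssubset_iff_of_subset]
        · exact ⟨u, Finset.mem_filter.2 ⟨hu, huv⟩,
            fun hmem => absurd (Finset.mem_filter.1 hmem).2 (lt_irrefl u)⟩
        · intro x hx
          obtain ⟨h1, h2⟩ := Finset.mem_filter.1 hx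
          exact Finset.mem_filter.2 ⟨h1, h2.trans huv⟩
      have hmapsR : ∀ t ∈ I, (I.filter (fun x => x < t)).card ∈ Finset.range I.card := by
        intro t ht
        rw [Finset.mem_range]
        have h1 := hcards t ht
        have hpos : 0 < (I.filter (fun x => t ≤ x)).card :=
          Finset.card_pos.2 ⟨t, Finset.mem_filter.2 ⟨ht, le_refl t⟩⟩
        omega
      have hinj : ∀ t₁ ∈ I, ∀ t₂ ∈ I,
          (I.filter (fun x => x < t₁)).card = (I.filter (fun x => x < t₂)).card → t₁ = t₂ := by
        intro t₁ h₁ t₂ h₂ heq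
        by_contra hne'
        rcases lt_or_gt_of_ne hne' with h' | h'
        · exact absurd heq (Nat.ne_of_lt (hmono _ _ h₁ h₂ h'))
        · exact absurd heq.symm (Nat.ne_of_lt (hmono _ _ h₂ h₁ h'))
      have hreix : (∑ t ∈ I,
            c ((I.filter (fun x => t ≤ x)).card) * h ((I.filter (fun x => x < t)).card))
          = ∑ k ∈ Finset.range I.card, c (I.card - k) * h k := by
        refine Finset.sum_bij (fun t _ => (I.filter (fun x => x < t)).card)
          (fun t ht => hmapsR t ht) (fun t₁ h₁ t₂ h₂ heq => hinj t₁ h₁ t₂ h₂ heq) ?_ ?_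
        · intro k hk
          have hsurj := Finset.surj_on_of_inj_on_of_card_le
            (s := I) (t := Finset.range I.card)
            (fun t _ => (I.filter (fun x => x < t)).card)
            (fun t ht => hmapsR t ht)
            (fun t₁ t₂ h₁ h₂ heq => hinj t₁ h₁ t₂ h₂ heq)
            (by rw [Finset.card_range]) k hk
          obtain ⟨t, ht, hkt⟩ := hsurj
          exact ⟨t, ht, hkt.symm⟩
        · intro t ht
          have h1 := hcards t ht
          rw [show (I.filter (fun x => t ≤ x)).card
            = I.card - (I.filter (fun x => x < t)).card from by omega]
      calc Hs c I
          = ∑ t ∈ I, ∑ π ∈ (Finset.univ.filter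
              (fun π : Finpartition I => ∀ B ∈ π.parts,
                ∀ i ∈ B, ∀ k ∈ B, ∀ j ∈ I, i < j → j < k → j ∈ B)).filter
                  (fun π => phi I hne π = t),
              (-1 : K) ^ π.parts.card * ∏ B ∈ π.parts, c B.card := by
            simp only [Hs]
            exact (Finset.sum_fiberwise_of_maps_to hmaps _).symm
        _ = ∑ t ∈ I, -(c ((I.filter (fun x => t ≤ x)).card)
              * h ((I.filter (fun x => x < t)).card)) := Finset.sum_congr rfl key
        _ = -∑ t ∈ I, c ((I.filter (fun x => t ≤ x)).card)
              * h ((I.filter (fun x => x < t)).card) := by rw [Finset.sum_neg_distrib]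
        _ = -∑ k ∈ Finset.range I.card, c (I.card - k) * h k := by rw [hreix]
        _ = h I.card := by
            obtain ⟨m', hm'⟩ : ∃ m', I.card = m' + 1 :=
              ⟨I.card - 1, by have := Finset.card_pos.2 hne; omega⟩
            rw [hm', hrec m']


end SecantAux


open scoped Classical in
/-- Let `K` be a commutative ring, `n ≥ 1`, `a, b : Fin n → K`, `s ∈ K`.
For `I ⊆ [n]` set `x(I) = (1−s)·∏_{i∈I} a_i + s·∏_{i∈I} b_i` (so `x(∅) = 1`), the
parametrization of the secant variety of `Σ_n`.  Define
`y(I) = ∑_{A ⊆ I} (−1)^{|I∖A|}·x(A)·∏_{i∈I∖A} x({i})` (one-cluster cumulants) and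
`z(I) = ∑_π (−1)^{|π|−1}·∏_{B∈π} y(B)`, the sum over all interval partitions `π` of `I`
(partitions all of whose blocks are order-convex in `I`).  Then for every `I` with
`|I| ≥ 2`, `z(I) = s·(1−s)·(1−2s)^{|I|−2}·∏_{i∈I} (b_i − a_i)`. -/
theorem secant_cumulants_toric {K : Type*} [CommRing K] {n : ℕ} (hn : 1 ≤ n)
    (a b : Fin n → K) (s : K)
    (x y z : Finset (Fin n) → K)
    (hx : ∀ I : Finset (Fin n), x I = (1 - s) * ∏ i ∈ I, a i + s * ∏ i ∈ I, b i)
    (hy : ∀ I : Finset (Fin n), y I = ∑ A ∈ I.powerset,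
      (-1 : K) ^ (I \ A).card * x A * ∏ i ∈ I \ A, x {i})
    (hz : ∀ I : Finset (Fin n), z I = ∑ π ∈ Finset.univ.filter
        (fun π : Finpartition I => ∀ B ∈ π.parts,
          ∀ i ∈ B, ∀ k ∈ B, ∀ j ∈ I, i < j → j < k → j ∈ B),
      (-1 : K) ^ (π.parts.card - 1) * ∏ B ∈ π.parts, y B) :
    ∀ I : Finset (Fin n), 2 ≤ I.card →
      z I = s * (1 - s) * (1 - 2 * s) ^ (I.card - 2) * ∏ i ∈ I, (b i - a i) := by
  intro I hI
  -- Step 1: closed formula for the one-cluster cumulants `y`.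
  have hd : ∀ J : Finset (Fin n), y J = SecantAux.cf s J.card * ∏ i ∈ J, (b i - a i) := by
    intro J
    rw [hy J]
    have hxs : ∀ i : Fin n, x {i} = (1 - s) * a i + s * b i := by
      intro i; rw [hx]; simp
    have hnegprod : ∀ S : Finset (Fin n),
        (∏ i ∈ S, (-((1 - s) * a i + s * b i))) =
          (-1 : K) ^ S.card * ∏ i ∈ S, ((1 - s) * a i + s * b i) := by
      intro S
      rw [show (∏ i ∈ S, (-((1 - s) * a i + s * b i)))
          = ∏ i ∈ S, ((-1 : K) * ((1 - s) * a i + s * b i)) from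
        Finset.prod_congr rfl fun i _ => (neg_one_mul _).symm]
      rw [Finset.prod_mul_distrib, Finset.prod_const]
    have step1 : ∀ A ∈ J.powerset,
        (-1 : K) ^ (J \ A).card * x A * ∏ i ∈ J \ A, x {i}
          = (1 - s) * ((∏ i ∈ A, a i) * ∏ i ∈ J \ A, (-((1 - s) * a i + s * b i)))
            + s * ((∏ i ∈ A, b i) * ∏ i ∈ J \ A, (-((1 - s) * a i + s * b i))) := by
      intro A _
      rw [hx, show (∏ i ∈ J \ A, x {i}) = ∏ i ∈ J \ A, ((1 - s) * a i + s * b i) from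
        Finset.prod_congr rfl fun i _ => hxs i, hnegprod]
      ring
    rw [Finset.sum_congr rfl step1, Finset.sum_add_distrib, ← Finset.mul_sum, ← Finset.mul_sum,
      ← Finset.prod_add (fun i => a i) (fun i => -((1 - s) * a i + s * b i)) J,
      ← Finset.prod_add (fun i => b i) (fun i => -((1 - s) * a i + s * b i)) J]
    have e1 : (∏ i ∈ J, (a i + -((1 - s) * a i + s * b i)))
        = (-s) ^ J.card * ∏ i ∈ J, (b i - a i) := by
      rw [Finset.prod_congr rfl (fun i _ =>
          show a i + -((1 - s) * a i + s * b i) = (-s) * (b i - a i) from by ring),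
        Finset.prod_mul_distrib, Finset.prod_const]
    have e2 : (∏ i ∈ J, (b i + -((1 - s) * a i + s * b i)))
        = (1 - s) ^ J.card * ∏ i ∈ J, (b i - a i) := by
      rw [Finset.prod_congr rfl (fun i _ =>
          show b i + -((1 - s) * a i + s * b i) = (1 - s) * (b i - a i) from by ring),
        Finset.prod_mul_distrib, Finset.prod_const]
    rw [e1, e2, SecantAux.cf]
    ring
  have hIne : I.Nonempty := Finset.card_pos.1 (by omega)
  -- Step 2: express `z I` through the interval-partition sum `Hs`.
  have hzH : z I = -((∏ i ∈ I, (b i - a i)) * SecantAux.Hs (SecantAux.cf s) I) := by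
    rw [hz I]
    have hterm : ∀ π ∈ Finset.univ.filter
        (fun π : Finpartition I => ∀ B ∈ π.parts,
          ∀ i ∈ B, ∀ k ∈ B, ∀ j ∈ I, i < j → j < k → j ∈ B),
        (-1 : K) ^ (π.parts.card - 1) * ∏ B ∈ π.parts, y B
          = -((∏ i ∈ I, (b i - a i))
              * ((-1 : K) ^ π.parts.card * ∏ B ∈ π.parts, SecantAux.cf s B.card)) := by
      intro π _
      have hprodd : (∏ B ∈ π.parts, ∏ i ∈ B, (b i - a i)) = ∏ i ∈ I, (b i - a i) := by
        conv_rhs => rw [← π.biUnion_parts]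
        exact (Finset.prod_biUnion π.disjoint).symm
      rw [show (∏ B ∈ π.parts, y B)
          = ∏ B ∈ π.parts, (SecantAux.cf s B.card * ∏ i ∈ B, (b i - a i)) from
        Finset.prod_congr rfl fun B _ => hd B, Finset.prod_mul_distrib, hprodd]
      have hc1 : 1 ≤ π.parts.card := Finset.card_pos.2 (π.parts_nonempty (by
        intro hbot
        rw [hbot] at hIne
        exact absurd hIne (by simp)))
      obtain ⟨p, hp⟩ : ∃ p, π.parts.card = p + 1 := ⟨π.parts.card - 1, by omega⟩
      rw [hp, show p + 1 - 1 = p from rfl, pow_succ]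
      ring
    rw [Finset.sum_congr rfl hterm, Finset.sum_neg_distrib, ← Finset.mul_sum]
    rfl
  -- Step 3: evaluate via the recursion.
  rw [hzH, SecantAux.Hs_eq (SecantAux.cf s) (SecantAux.hf s) rfl (SecantAux.hf_rec s) I]
  obtain ⟨q, hq⟩ : ∃ q, I.card = q + 2 := ⟨I.card - 2, by omega⟩
  rw [hq, show q + 2 - 2 = q from by omega]
  show -((∏ i ∈ I, (b i - a i)) * -(s * (1 - s) * (1 - 2 * s) ^ q)) = _
  ring
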